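/- For every integer b ≥ 1 and every even integer τ ≥ 2 there exists a graph history 𝒢 = (G_1, …, G_τ) on n = 2b+3 vertices such that: (1) every score_a peeling sequence S_0 = V, S_1, …, S_{n−1} satisfies max_{0 ≤ i ≤ n−1} f_am(S_i, 𝒢) ≤ 2; and (2) there exists a subset S* of 2b vertices with f_am(S*, 𝒢) = b. Consequently, the approximation ratio of the FindBFF_A algorithm for the BFF-am problem is O(1/n). (The instance: 2b vertices form a complete b×b bipartite graph in every snapshot; a vertex s is joined to all vertices in every snapshot except the last, where it is joined only to two extra vertices u and v; u and v are joined to each other in all snapshots; u is joined to all 2b bipartite vertices in the first τ/2 snapshots and v in the last τ/2 snapshots.) -/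
import Mathlib


open scoped Classical
open Finset

/-- The degree of `u` in the subgraph of `G` induced by the vertex set `S`. -/
noncomputable def degIn {n : ℕ} (G : SimpleGraph (Fin n)) (S : Finset (Fin n)) (u : Fin n) : ℕ :=
  (S.filter fun v => G.Adj u v).card

/-- The number of edges of the subgraph of `G` induced by `S`. -/
noncomputable def edgesIn {n : ℕ} (G : SimpleGraph (Fin n)) (S : Finset (Fin n)) : ℕ :=
  ((S ×ˢ S).filter fun p => p.1 < p.2 ∧ G.Adj p.1 p.2).card

/-- Minimum density `d_m(S, G)`: the minimum degree in the induced subgraph `G[S]`. -/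
noncomputable def minDensity {n : ℕ} (G : SimpleGraph (Fin n)) (S : Finset (Fin n)) : ℕ :=
  sInf ((fun u => degIn G S u) '' (S : Set (Fin n)))

/-- Average density `d_a(S, G) = 2·|E(G[S])| / |S|`. -/
noncomputable def avgDensity {n : ℕ} (G : SimpleGraph (Fin n)) (S : Finset (Fin n)) : ℝ :=
  2 * (edgesIn G S : ℝ) / (S.card : ℝ)

/-- `f_mm(S, 𝒢) = min_t d_m(S, G_t)`. -/
noncomputable def fmm {n τ : ℕ} (G : Fin τ → SimpleGraph (Fin n)) (S : Finset (Fin n)) : ℕ :=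
  sInf (Set.range fun t => minDensity (G t) S)

/-- `f_am(S, 𝒢) = (1/τ) · Σ_t d_m(S, G_t)`. -/
noncomputable def fam {n τ : ℕ} (G : Fin τ → SimpleGraph (Fin n)) (S : Finset (Fin n)) : ℝ :=
  (1 / (τ : ℝ)) * ∑ t, (minDensity (G t) S : ℝ)

/-- `f_ma(S, 𝒢) = min_t d_a(S, G_t)`. -/
noncomputable def fma {n τ : ℕ} (G : Fin τ → SimpleGraph (Fin n)) (S : Finset (Fin n)) : ℝ :=
  sInf (Set.range fun t => avgDensity (G t) S)

/-- `f_aa(S, 𝒢) = (1/τ) · Σ_t d_a(S, G_t)`. -/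
noncomputable def faa {n τ : ℕ} (G : Fin τ → SimpleGraph (Fin n)) (S : Finset (Fin n)) : ℝ :=
  (1 / (τ : ℝ)) * ∑ t, avgDensity (G t) S

/-- `score_m(v, 𝒢[S]) = min_t degree(v, G_t[S])`. -/
noncomputable def scoreM {n τ : ℕ} (G : Fin τ → SimpleGraph (Fin n)) (S : Finset (Fin n))
    (v : Fin n) : ℕ :=
  sInf (Set.range fun t => degIn (G t) S v)

/-- `score_a(v, 𝒢[S]) = (1/τ) · Σ_t degree(v, G_t[S])`. -/
noncomputable def scoreA {n τ : ℕ} (G : Fin τ → SimpleGraph (Fin n)) (S : Finset (Fin n))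
    (v : Fin n) : ℝ :=
  (1 / (τ : ℝ)) * ∑ t, (degIn (G t) S v : ℝ)

/-- A `score_m` peeling sequence: `S 0 = V`, and at each step the removed vertex `v i`
minimizes `score_m` over the current set. -/
def IsScoreMPeeling {n τ : ℕ} (G : Fin τ → SimpleGraph (Fin n)) (S : ℕ → Finset (Fin n))
    (v : ℕ → Fin n) : Prop :=
  S 0 = Finset.univ ∧
    ∀ i < n - 1, v i ∈ S i ∧ S (i + 1) = S i \ {v i} ∧
      ∀ u ∈ S i, scoreM G (S i) (v i) ≤ scoreM G (S i) u

/-- A `score_a` peeling sequence: `S 0 = V`, and at each step the removed vertex `v i`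
minimizes `score_a` over the current set. -/
def IsScoreAPeeling {n τ : ℕ} (G : Fin τ → SimpleGraph (Fin n)) (S : ℕ → Finset (Fin n))
    (v : ℕ → Fin n) : Prop :=
  S 0 = Finset.univ ∧
    ∀ i < n - 1, v i ∈ S i ∧ S (i + 1) = S i \ {v i} ∧
      ∀ u ∈ S i, scoreA G (S i) (v i) ≤ scoreA G (S i) u

set_option maxHeartbeats 1000000
namespace BffSix

def relN (b τ tv xv yv : ℕ) : Prop :=
  (xv < b ∧ b ≤ yv ∧ yv < 2*b) ∨
  (xv = 2*b+2 ∧ (tv+1 < τ ∨ yv = 2*b ∨ yv = 2*b+1)) ∨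
  (xv = 2*b ∧ yv = 2*b+1) ∨
  (xv = 2*b ∧ yv < 2*b ∧ 2*tv < τ) ∨
  (xv = 2*b+1 ∧ yv < 2*b ∧ τ ≤ 2*tv)

noncomputable def Gr (b τ : ℕ) (t : Fin τ) : SimpleGraph (Fin (2*b+3)) :=
  SimpleGraph.fromRel (fun x y => relN b τ t.val x.val y.val)

lemma adj_iff {b τ : ℕ} (t : Fin τ) (x y : Fin (2*b+3)) :
    (Gr b τ t).Adj x y ↔
      x.val ≠ y.val ∧ (relN b τ t.val x.val y.val ∨ relN b τ t.val y.val x.val) := by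
  simp [Gr, SimpleGraph.fromRel_adj, Fin.ext_iff, ne_eq]

def uV (b : ℕ) : Fin (2*b+3) := ⟨2*b, by omega⟩
def vV (b : ℕ) : Fin (2*b+3) := ⟨2*b+1, by omega⟩
def sV (b : ℕ) : Fin (2*b+3) := ⟨2*b+2, by omega⟩
@[simp] lemma uV_val (b : ℕ) : (uV b).val = 2*b := rfl
@[simp] lemma vV_val (b : ℕ) : (vV b).val = 2*b+1 := rfl
@[simp] lemma sV_val (b : ℕ) : (sV b).val = 2*b+2 := rfl

lemma degIn_le {n : ℕ} {G : SimpleGraph (Fin n)} {S T : Finset (Fin n)} {u : Fin n}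
    (h : ∀ y ∈ S, G.Adj u y → y ∈ T) : degIn G S u ≤ T.card := by
  apply Finset.card_le_card
  intro y hy
  simp only [degIn, Finset.mem_filter] at hy
  exact h y hy.1 hy.2

lemma le_degIn {n : ℕ} {G : SimpleGraph (Fin n)} {S T : Finset (Fin n)} {u : Fin n}
    (h : ∀ y ∈ T, y ∈ S ∧ G.Adj u y) : T.card ≤ degIn G S u := by
  apply Finset.card_le_card
  intro y hy
  simp only [degIn, Finset.mem_filter]
  exact h y hy

lemma minDensity_le_degIn {n : ℕ} {G : SimpleGraph (Fin n)} {S : Finset (Fin n)} {x : Fin n}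
    (hx : x ∈ S) : minDensity G S ≤ degIn G S x :=
  Nat.sInf_le ⟨x, hx, rfl⟩

lemma card_univ_filter_val {N : ℕ} (q : ℕ → Prop) [DecidablePred q] :
    (univ.filter fun t : Fin N => q t.val).card = ((range N).filter q).card := by
  rw [Finset.card_filter, Finset.card_filter,
    Fin.sum_univ_eq_sum_range (fun k => if q k then 1 else 0)]

lemma sum_if_const {τ : ℕ} (p : Fin τ → Prop) [DecidablePred p] (c1 c2 : ℕ) :
    (∑ t : Fin τ, if p t then c1 else c2)
      = (univ.filter p).card * c1 + (univ.filter fun t => ¬ p t).card * c2 := by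
  rw [Finset.sum_ite, Finset.sum_const, Finset.sum_const, smul_eq_mul, smul_eq_mul]

end BffSix


namespace BffSix

lemma cnt_firsthalf {τ h : ℕ} (hτe : τ = h + h) :
    (univ.filter fun t : Fin τ => 2*t.val < τ).card = h := by
  rw [card_univ_filter_val (fun k => 2*k < τ)]
  have : (range τ).filter (fun k => 2*k < τ) = range h := by
    ext k; simp only [Finset.mem_filter, Finset.mem_range]; omega
  rw [this, Finset.card_range]

lemma cnt_secondhalf {τ h : ℕ} (hτe : τ = h + h) :
    (univ.filter fun t : Fin τ => ¬ 2*t.val < τ).card = h := by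
  rw [card_univ_filter_val (fun k => ¬ 2*k < τ)]
  have : (range τ).filter (fun k => ¬ 2*k < τ) = (range τ).filter (fun k => h ≤ k) := by
    ext k; simp only [Finset.mem_filter, Finset.mem_range]; omega
  rw [this]
  have : (range τ).filter (fun k => h ≤ k) = Finset.Ico h τ := by
    ext k; simp only [Finset.mem_filter, Finset.mem_range, Finset.mem_Ico]; omega
  rw [this, Nat.card_Ico]; omega

lemma cnt_nonlast {τ : ℕ} (hτ : 2 ≤ τ) :
    (univ.filter fun t : Fin τ => t.val + 1 < τ).card = τ - 1 := by
  rw [card_univ_filter_val (fun k => k + 1 < τ)]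
  have : (range τ).filter (fun k => k + 1 < τ) = range (τ - 1) := by
    ext k; simp only [Finset.mem_filter, Finset.mem_range]; omega
  rw [this, Finset.card_range]

lemma cnt_last {τ : ℕ} (hτ : 2 ≤ τ) :
    (univ.filter fun t : Fin τ => ¬ t.val + 1 < τ).card = 1 := by
  rw [card_univ_filter_val (fun k => ¬ k + 1 < τ)]
  have : (range τ).filter (fun k => ¬ k + 1 < τ) = {τ - 1} := by
    ext k; simp only [Finset.mem_filter, Finset.mem_range, Finset.mem_singleton]; omega
  rw [this, Finset.card_singleton]

-- upper bound for u in second half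
lemma degIn_u_ub {b τ : ℕ} {S : Finset (Fin (2*b+3))} {t : Fin τ} (ht : τ ≤ 2*t.val) :
    degIn (Gr b τ t) S (uV b) ≤ 2 := by
  have := degIn_le (G := Gr b τ t) (S := S) (T := {vV b, sV b}) (u := uV b) ?_
  · exact le_trans this (by
      apply le_trans (Finset.card_insert_le _ _); simp)
  · intro y hy hadj
    rw [adj_iff] at hadj
    simp only [uV_val] at hadj; unfold relN at hadj
    simp only [Finset.mem_insert, Finset.mem_singleton, Fin.ext_iff, vV_val, sV_val]
    omega

lemma degIn_v_ub {b τ : ℕ} {S : Finset (Fin (2*b+3))} {t : Fin τ} (ht : 2*t.val < τ) :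
    degIn (Gr b τ t) S (vV b) ≤ 2 := by
  have := degIn_le (G := Gr b τ t) (S := S) (T := {uV b, sV b}) (u := vV b) ?_
  · exact le_trans this (by
      apply le_trans (Finset.card_insert_le _ _); simp)
  · intro y hy hadj
    rw [adj_iff] at hadj
    simp only [vV_val] at hadj; unfold relN at hadj
    simp only [Finset.mem_insert, Finset.mem_singleton, Fin.ext_iff, uV_val, sV_val]
    omega

end BffSix


namespace BffSix

lemma degIn_u_lb {b τ : ℕ} {S : Finset (Fin (2*b+3))} (hs : sV b ∈ S) (hv : vV b ∈ S)
    (t : Fin τ) :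
    (if 2*t.val < τ then (S.filter fun x => x.val < 2*b).card + 2 else 2)
      ≤ degIn (Gr b τ t) S (uV b) := by
  set WS := S.filter fun x : Fin (2*b+3) => x.val < 2*b with hWS
  by_cases h : 2*t.val < τ
  · rw [if_pos h]
    have h1 : vV b ∉ WS := by simp [hWS, Finset.mem_filter]
    have h2 : sV b ∉ insert (vV b) WS := by
      simp [hWS, Finset.mem_insert, Finset.mem_filter, Fin.ext_iff]
    have hcard : (insert (sV b) (insert (vV b) WS)).card = WS.card + 2 := by
      rw [Finset.card_insert_of_notMem h2, Finset.card_insert_of_notMem h1]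
    have := le_degIn (G := Gr b τ t) (S := S) (T := insert (sV b) (insert (vV b) WS))
      (u := uV b) ?_
    · omega
    · intro y hy
      rcases Finset.mem_insert.mp hy with rfl | hy'
      · refine ⟨hs, ?_⟩
        rw [adj_iff]; simp only [uV_val, sV_val]; unfold relN; omega
      rcases Finset.mem_insert.mp hy' with rfl | hy''
      · refine ⟨hv, ?_⟩
        rw [adj_iff]; simp only [uV_val, vV_val]; unfold relN; omega
      · have hyS : y ∈ S := Finset.mem_of_mem_filter _ hy''
        have hy2b : y.val < 2*b := (Finset.mem_filter.mp hy'').2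
        refine ⟨hyS, ?_⟩
        rw [adj_iff]; simp only [uV_val]; unfold relN; omega
  · rw [if_neg h]
    have hne : (sV b) ≠ (vV b) := by simp [Fin.ext_iff]
    have hcard : ({sV b, vV b} : Finset (Fin (2*b+3))).card = 2 := by
      rw [Finset.card_insert_of_notMem (by simp [Fin.ext_iff]), Finset.card_singleton]
    have := le_degIn (G := Gr b τ t) (S := S) (T := {sV b, vV b}) (u := uV b) ?_
    · omega
    · intro y hy
      rcases Finset.mem_insert.mp hy with rfl | hy'
      · refine ⟨hs, ?_⟩
        rw [adj_iff]; simp only [uV_val, sV_val]; unfold relN; omega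
      · rw [Finset.mem_singleton.mp hy']
        refine ⟨hv, ?_⟩
        rw [adj_iff]; simp only [uV_val, vV_val]; unfold relN; omega

lemma degIn_v_lb {b τ : ℕ} {S : Finset (Fin (2*b+3))} (hs : sV b ∈ S) (hu : uV b ∈ S)
    (t : Fin τ) :
    (if 2*t.val < τ then 2 else (S.filter fun x => x.val < 2*b).card + 2)
      ≤ degIn (Gr b τ t) S (vV b) := by
  set WS := S.filter fun x : Fin (2*b+3) => x.val < 2*b with hWS
  by_cases h : 2*t.val < τ
  · rw [if_pos h]
    have hcard : ({sV b, uV b} : Finset (Fin (2*b+3))).card = 2 := by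
      rw [Finset.card_insert_of_notMem (by simp [Fin.ext_iff]), Finset.card_singleton]
    have := le_degIn (G := Gr b τ t) (S := S) (T := {sV b, uV b}) (u := vV b) ?_
    · omega
    · intro y hy
      rcases Finset.mem_insert.mp hy with rfl | hy'
      · refine ⟨hs, ?_⟩
        rw [adj_iff]; simp only [vV_val, sV_val]; unfold relN; omega
      · rw [Finset.mem_singleton.mp hy']
        refine ⟨hu, ?_⟩
        rw [adj_iff]; simp only [vV_val, uV_val]; unfold relN; omega
  · rw [if_neg h]
    have h1 : uV b ∉ WS := by simp [hWS, Finset.mem_filter]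
    have h2 : sV b ∉ insert (uV b) WS := by
      simp [hWS, Finset.mem_insert, Finset.mem_filter, Fin.ext_iff]
    have hcard : (insert (sV b) (insert (uV b) WS)).card = WS.card + 2 := by
      rw [Finset.card_insert_of_notMem h2, Finset.card_insert_of_notMem h1]
    have := le_degIn (G := Gr b τ t) (S := S) (T := insert (sV b) (insert (uV b) WS))
      (u := vV b) ?_
    · omega
    · intro y hy
      rcases Finset.mem_insert.mp hy with rfl | hy'
      · refine ⟨hs, ?_⟩
        rw [adj_iff]; simp only [vV_val, sV_val]; unfold relN; omega
      rcases Finset.mem_insert.mp hy' with rfl | hy''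
      · refine ⟨hu, ?_⟩
        rw [adj_iff]; simp only [vV_val, uV_val]; unfold relN; omega
      · have hyS : y ∈ S := Finset.mem_of_mem_filter _ hy''
        have hy2b : y.val < 2*b := (Finset.mem_filter.mp hy'').2
        refine ⟨hyS, ?_⟩
        rw [adj_iff]; simp only [vV_val]; unfold relN; omega

lemma degIn_s_lb {b τ : ℕ} {S : Finset (Fin (2*b+3))} (hu : uV b ∈ S) (hv : vV b ∈ S)
    (t : Fin τ) :
    (if t.val + 1 < τ then (S.filter fun x => x.val < 2*b).card + 2 else 2)
      ≤ degIn (Gr b τ t) S (sV b) := by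
  set WS := S.filter fun x : Fin (2*b+3) => x.val < 2*b with hWS
  by_cases h : t.val + 1 < τ
  · rw [if_pos h]
    have h1 : vV b ∉ WS := by simp [hWS, Finset.mem_filter]
    have h2 : uV b ∉ insert (vV b) WS := by
      simp [hWS, Finset.mem_insert, Finset.mem_filter, Fin.ext_iff]
    have hcard : (insert (uV b) (insert (vV b) WS)).card = WS.card + 2 := by
      rw [Finset.card_insert_of_notMem h2, Finset.card_insert_of_notMem h1]
    have := le_degIn (G := Gr b τ t) (S := S) (T := insert (uV b) (insert (vV b) WS))
      (u := sV b) ?_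
    · omega
    · intro y hy
      rcases Finset.mem_insert.mp hy with rfl | hy'
      · refine ⟨hu, ?_⟩
        rw [adj_iff]; simp only [sV_val, uV_val]; unfold relN; omega
      rcases Finset.mem_insert.mp hy' with rfl | hy''
      · refine ⟨hv, ?_⟩
        rw [adj_iff]; simp only [sV_val, vV_val]; unfold relN; omega
      · have hyS : y ∈ S := Finset.mem_of_mem_filter _ hy''
        have hy2b : y.val < 2*b := (Finset.mem_filter.mp hy'').2
        refine ⟨hyS, ?_⟩
        rw [adj_iff]; simp only [sV_val]; unfold relN; omega
  · rw [if_neg h]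
    have hcard : ({uV b, vV b} : Finset (Fin (2*b+3))).card = 2 := by
      rw [Finset.card_insert_of_notMem (by simp [Fin.ext_iff]), Finset.card_singleton]
    have := le_degIn (G := Gr b τ t) (S := S) (T := {uV b, vV b}) (u := sV b) ?_
    · omega
    · intro y hy
      rcases Finset.mem_insert.mp hy with rfl | hy'
      · refine ⟨hu, ?_⟩
        rw [adj_iff]; simp only [sV_val, uV_val]; unfold relN; omega
      · rw [Finset.mem_singleton.mp hy']
        refine ⟨hv, ?_⟩
        rw [adj_iff]; simp only [sV_val, vV_val]; unfold relN; omega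

lemma degIn_w_ub {b τ : ℕ} (hτ2 : 2 ≤ τ) {S : Finset (Fin (2*b+3))} {w : Fin (2*b+3)}
    (hw : w.val < 2*b) (t : Fin τ) :
    degIn (Gr b τ t) S w ≤
      (S.filter fun y : Fin (2*b+3) =>
        y.val < 2*b ∧ ((w.val < b ∧ b ≤ y.val) ∨ (y.val < b ∧ b ≤ w.val))).card
      + (if t.val + 1 < τ then 2 else 1) := by
  set D := S.filter fun y : Fin (2*b+3) =>
      y.val < 2*b ∧ ((w.val < b ∧ b ≤ y.val) ∨ (y.val < b ∧ b ≤ w.val)) with hD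
  have hmemD : ∀ y ∈ S, y.val < 2*b → (Gr b τ t).Adj w y → y ∈ D := by
    intro y hyS hy2b hadj
    rw [adj_iff] at hadj
    unfold relN at hadj
    rw [hD, Finset.mem_filter]
    exact ⟨hyS, by omega⟩
  by_cases hlast : t.val + 1 < τ
  · rw [if_pos hlast]
    by_cases hfh : 2*t.val < τ
    · have := degIn_le (G := Gr b τ t) (S := S) (T := insert (sV b) (insert (uV b) D))
        (u := w) ?_
      · have hc : (insert (sV b) (insert (uV b) D)).card ≤ D.card + 2 := by
          refine le_trans (Finset.card_insert_le _ _) ?_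
          have := Finset.card_insert_le (uV b) D
          omega
        omega
      · intro y hyS hadj
        by_cases hy2b : y.val < 2*b
        · exact Finset.mem_insert_of_mem (Finset.mem_insert_of_mem (hmemD y hyS hy2b hadj))
        · have hval : y.val = 2*b+2 ∨ y.val = 2*b := by
            rw [adj_iff] at hadj
            unfold relN at hadj
            omega
          simp only [Finset.mem_insert, Fin.ext_iff, sV_val, uV_val]
          tauto
    · have := degIn_le (G := Gr b τ t) (S := S) (T := insert (sV b) (insert (vV b) D))
        (u := w) ?_
      · have hc : (insert (sV b) (insert (vV b) D)).card ≤ D.card + 2 := by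
          refine le_trans (Finset.card_insert_le _ _) ?_
          have := Finset.card_insert_le (vV b) D
          omega
        omega
      · intro y hyS hadj
        by_cases hy2b : y.val < 2*b
        · exact Finset.mem_insert_of_mem (Finset.mem_insert_of_mem (hmemD y hyS hy2b hadj))
        · have hval : y.val = 2*b+2 ∨ y.val = 2*b+1 := by
            rw [adj_iff] at hadj
            unfold relN at hadj
            omega
          simp only [Finset.mem_insert, Fin.ext_iff, sV_val, vV_val]
          tauto
  · rw [if_neg hlast]
    have ht2 : τ ≤ 2*t.val := by have := t.isLt; omega
    have := degIn_le (G := Gr b τ t) (S := S) (T := insert (vV b) D) (u := w) ?_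
    · have hc := Finset.card_insert_le (vV b) D
      omega
    · intro y hyS hadj
      by_cases hy2b : y.val < 2*b
      · exact Finset.mem_insert_of_mem (hmemD y hyS hy2b hadj)
      · have hval : y.val = 2*b+1 := by
          rw [adj_iff] at hadj
          unfold relN at hadj
          omega
        simp only [Finset.mem_insert, Fin.ext_iff, vV_val]
        tauto

end BffSix


namespace BffSix

lemma scoreA_lt_of_sum_lt {b τ : ℕ} (hτ : 0 < τ) {S : Finset (Fin (2*b+3))} {x y : Fin (2*b+3)}
    (hlt : (∑ t, degIn (Gr b τ t) S x) < ∑ t, degIn (Gr b τ t) S y) :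
    scoreA (Gr b τ) S x < scoreA (Gr b τ) S y := by
  unfold scoreA
  have hτR : (0:ℝ) < τ := by exact_mod_cast hτ
  apply mul_lt_mul_of_pos_left ?_ (by positivity : (0:ℝ) < 1/τ)
  rw [← Nat.cast_sum, ← Nat.cast_sum]
  exact_mod_cast hlt

lemma score_comp {b τ k : ℕ} (hτe : τ = (k+1) + (k+1)) {S : Finset (Fin (2*b+3))}
    (hs : sV b ∈ S) (hu : uV b ∈ S) (hv : vV b ∈ S) (hWne : ∃ x ∈ S, x.val < 2*b) :
    ∃ w ∈ S, w.val < 2*b ∧ scoreA (Gr b τ) S w < scoreA (Gr b τ) S (uV b)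
      ∧ scoreA (Gr b τ) S w < scoreA (Gr b τ) S (vV b)
      ∧ scoreA (Gr b τ) S w < scoreA (Gr b τ) S (sV b) := by
  have hτ2 : 2 ≤ τ := by omega
  have hτpos : 0 < τ := by omega
  set m := (S.filter fun x : Fin (2*b+3) => x.val < 2*b).card with hm
  set A := S.filter (fun x : Fin (2*b+3) => x.val < b) with hA
  set B := S.filter (fun x : Fin (2*b+3) => b ≤ x.val ∧ x.val < 2*b) with hB
  have eA : A = (S.filter fun x : Fin (2*b+3) => x.val < 2*b).filter
      (fun x => x.val < b) := by
    rw [hA, Finset.filter_filter]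
    apply Finset.filter_congr
    intro x _
    constructor
    · intro hx; exact ⟨by omega, hx⟩
    · intro hx; exact hx.2
  have eB : B = (S.filter fun x : Fin (2*b+3) => x.val < 2*b).filter
      (fun x => ¬ x.val < b) := by
    rw [hB, Finset.filter_filter]
    apply Finset.filter_congr
    intro x _
    constructor
    · intro hx; exact ⟨by omega, by omega⟩
    · intro hx; exact ⟨by omega, hx.1⟩
  have hm_split : A.card + B.card = m := by
    rw [eA, eB, hm]
    exact Finset.card_filter_add_card_filter_not _
  have hm1 : 1 ≤ m := by
    obtain ⟨x, hxS, hx⟩ := hWne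
    have : x ∈ S.filter fun x : Fin (2*b+3) => x.val < 2*b :=
      Finset.mem_filter.mpr ⟨hxS, hx⟩
    have := Finset.card_pos.mpr ⟨x, this⟩
    omega
  -- main argument for a chosen w
  have key : ∀ w ∈ S, w.val < 2*b →
      2 * (S.filter fun y : Fin (2*b+3) =>
        y.val < 2*b ∧ ((w.val < b ∧ b ≤ y.val) ∨ (y.val < b ∧ b ≤ w.val))).card ≤ m →
      scoreA (Gr b τ) S w < scoreA (Gr b τ) S (uV b)
        ∧ scoreA (Gr b τ) S w < scoreA (Gr b τ) S (vV b)
        ∧ scoreA (Gr b τ) S w < scoreA (Gr b τ) S (sV b) := by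
    intro w hwS hw2b hd2
    set d := (S.filter fun y : Fin (2*b+3) =>
        y.val < 2*b ∧ ((w.val < b ∧ b ≤ y.val) ∨ (y.val < b ∧ b ≤ w.val))).card with hd
    have h2d : (k+1) * (2*d) ≤ (k+1) * m := Nat.mul_le_mul_left _ hd2
    have hsw : (∑ t : Fin τ, degIn (Gr b τ t) S w) ≤ (2*k+1) * (d+2) + 1 * (d+1) := by
      calc (∑ t : Fin τ, degIn (Gr b τ t) S w)
          ≤ ∑ t : Fin τ, (if t.val + 1 < τ then d+2 else d+1) := by
            apply Finset.sum_le_sum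
            intro t _
            have h0 := degIn_w_ub (S := S) hτ2 hw2b t
            rw [← hd] at h0
            by_cases ht : t.val + 1 < τ
            · rw [if_pos ht] at h0 ⊢; omega
            · rw [if_neg ht] at h0 ⊢; omega
        _ = (univ.filter fun t : Fin τ => t.val + 1 < τ).card * (d+2)
              + (univ.filter fun t : Fin τ => ¬ t.val + 1 < τ).card * (d+1) :=
            sum_if_const _ _ _
        _ = (2*k+1) * (d+2) + 1 * (d+1) := by
            rw [cnt_nonlast hτ2, cnt_last hτ2]
            have : τ - 1 = 2*k+1 := by omega
            rw [this]
    have hsu : (k+1)*(m+2) + (k+1)*2 ≤ ∑ t : Fin τ, degIn (Gr b τ t) S (uV b) := by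
      calc (k+1)*(m+2) + (k+1)*2
          = (univ.filter fun t : Fin τ => 2*t.val < τ).card * (m+2)
              + (univ.filter fun t : Fin τ => ¬ 2*t.val < τ).card * 2 := by
            rw [cnt_firsthalf hτe, cnt_secondhalf hτe]
        _ = ∑ t : Fin τ, (if 2*t.val < τ then m+2 else 2) := (sum_if_const _ _ _).symm
        _ ≤ ∑ t : Fin τ, degIn (Gr b τ t) S (uV b) := by
            apply Finset.sum_le_sum
            intro t _
            have h0 := degIn_u_lb (τ := τ) hs hv t
            rw [← hm] at h0
            exact h0
    have hsv : (k+1)*2 + (k+1)*(m+2) ≤ ∑ t : Fin τ, degIn (Gr b τ t) S (vV b) := by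
      calc (k+1)*2 + (k+1)*(m+2)
          = (univ.filter fun t : Fin τ => 2*t.val < τ).card * 2
              + (univ.filter fun t : Fin τ => ¬ 2*t.val < τ).card * (m+2) := by
            rw [cnt_firsthalf hτe, cnt_secondhalf hτe]
        _ = ∑ t : Fin τ, (if 2*t.val < τ then 2 else m+2) := (sum_if_const _ _ _).symm
        _ ≤ ∑ t : Fin τ, degIn (Gr b τ t) S (vV b) := by
            apply Finset.sum_le_sum
            intro t _
            have h0 := degIn_v_lb (τ := τ) hs hu t
            rw [← hm] at h0
            exact h0
    have hss : (2*k+1)*(m+2) + 1*2 ≤ ∑ t : Fin τ, degIn (Gr b τ t) S (sV b) := by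
      calc (2*k+1)*(m+2) + 1*2
          = (univ.filter fun t : Fin τ => t.val + 1 < τ).card * (m+2)
              + (univ.filter fun t : Fin τ => ¬ t.val + 1 < τ).card * 2 := by
            rw [cnt_nonlast hτ2, cnt_last hτ2]
            have : τ - 1 = 2*k+1 := by omega
            rw [this]
        _ = ∑ t : Fin τ, (if t.val + 1 < τ then m+2 else 2) := (sum_if_const _ _ _).symm
        _ ≤ ∑ t : Fin τ, degIn (Gr b τ t) S (sV b) := by
            apply Finset.sum_le_sum
            intro t _
            have h0 := degIn_s_lb (τ := τ) hu hv t
            rw [← hm] at h0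
            exact h0
    refine ⟨?_, ?_, ?_⟩ <;> apply scoreA_lt_of_sum_lt hτpos
    · refine lt_of_le_of_lt hsw (lt_of_lt_of_le ?_ hsu)
      nlinarith [h2d]
    · refine lt_of_le_of_lt hsw (lt_of_lt_of_le ?_ hsv)
      nlinarith [h2d]
    · refine lt_of_le_of_lt hsw (lt_of_lt_of_le ?_ hss)
      nlinarith [h2d, Nat.zero_le (k*m), Nat.zero_le (k*d)]
  -- choose w
  rcases le_or_gt B.card A.card with hc | hc
  · have hAne : A.Nonempty := by
      rw [← Finset.card_pos]; omega
    obtain ⟨w, hwA⟩ := hAne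
    have hwS : w ∈ S := (Finset.mem_filter.mp hwA).1
    have hwb : w.val < b := (Finset.mem_filter.mp hwA).2
    have hDB : (S.filter fun y : Fin (2*b+3) =>
        y.val < 2*b ∧ ((w.val < b ∧ b ≤ y.val) ∨ (y.val < b ∧ b ≤ w.val))) = B := by
      rw [hB]
      apply Finset.filter_congr
      intro y _
      constructor
      · intro hy; omega
      · intro hy; omega
    refine ⟨w, hwS, by omega, ?_⟩
    apply key w hwS (by omega)
    rw [hDB]; omega
  · have hBne : B.Nonempty := by
      rw [← Finset.card_pos]; omega
    obtain ⟨w, hwB⟩ := hBne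
    have hwS : w ∈ S := (Finset.mem_filter.mp hwB).1
    have hwb : b ≤ w.val ∧ w.val < 2*b := (Finset.mem_filter.mp hwB).2
    have hDA : (S.filter fun y : Fin (2*b+3) =>
        y.val < 2*b ∧ ((w.val < b ∧ b ≤ y.val) ∨ (y.val < b ∧ b ≤ w.val))) = A := by
      rw [hA]
      apply Finset.filter_congr
      intro y _
      constructor
      · intro hy; omega
      · intro hy; omega
    refine ⟨w, hwS, by omega, ?_⟩
    apply key w hwS (by omega)
    rw [hDA]; omega

end BffSix


namespace BffSix

lemma fam_le_of_minD {b τ : ℕ} (hτpos : 0 < τ) {S : Finset (Fin (2*b+3))}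
    (hmd : ∀ t : Fin τ, minDensity (Gr b τ t) S ≤ 2) : fam (Gr b τ) S ≤ 2 := by
  unfold fam
  have hτR : (0:ℝ) < τ := by exact_mod_cast hτpos
  have hsum : (∑ t : Fin τ, (minDensity (Gr b τ t) S : ℝ)) ≤ (τ:ℝ) * 2 := by
    calc (∑ t : Fin τ, (minDensity (Gr b τ t) S : ℝ)) ≤ ∑ t : Fin τ, (2:ℝ) := by
          apply Finset.sum_le_sum
          intro t _
          exact_mod_cast hmd t
      _ = (τ:ℝ) * 2 := by
          rw [Finset.sum_const, Finset.card_univ, Fintype.card_fin, nsmul_eq_mul]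
  calc (1/(τ:ℝ)) * ∑ t : Fin τ, (minDensity (Gr b τ t) S : ℝ)
      ≤ (1/(τ:ℝ)) * ((τ:ℝ) * 2) := by
        apply mul_le_mul_of_nonneg_left hsum
        positivity
    _ = 2 := by field_simp

lemma fam_le_two_uv {b τ : ℕ} (hτ2 : 2 ≤ τ) {S : Finset (Fin (2*b+3))}
    (hu : uV b ∈ S) (hv : vV b ∈ S) : fam (Gr b τ) S ≤ 2 := by
  apply fam_le_of_minD (by omega)
  intro t
  by_cases hfh : 2*t.val < τ
  · exact le_trans (minDensity_le_degIn hv) (degIn_v_ub hfh)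
  · exact le_trans (minDensity_le_degIn hu) (degIn_u_ub (by omega))

lemma fam_le_two_small {b τ : ℕ} (hτ2 : 2 ≤ τ) {S : Finset (Fin (2*b+3))}
    (h3 : S.card ≤ 3) : fam (Gr b τ) S ≤ 2 := by
  apply fam_le_of_minD (by omega)
  intro t
  rcases S.eq_empty_or_nonempty with rfl | ⟨x, hx⟩
  · simp [minDensity]
  · refine le_trans (minDensity_le_degIn hx) ?_
    have hsub := degIn_le (G := Gr b τ t) (S := S) (T := S.erase x) (u := x) ?_
    · have := Finset.card_erase_of_mem hx
      have hpos := Finset.card_pos.mpr ⟨x, hx⟩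
      omega
    · intro y hy hadj
      exact Finset.mem_erase.mpr ⟨Ne.symm hadj.ne, hy⟩

lemma side_card1 {b : ℕ} :
    (univ.filter fun y : Fin (2*b+3) => y.val < b).card = b := by
  rw [card_univ_filter_val (fun k => k < b)]
  have : (range (2*b+3)).filter (fun k => k < b) = range b := by
    ext k; simp only [Finset.mem_filter, Finset.mem_range]; omega
  rw [this, Finset.card_range]

lemma side_card2 {b : ℕ} :
    (univ.filter fun y : Fin (2*b+3) => b ≤ y.val ∧ y.val < 2*b).card = b := by
  rw [card_univ_filter_val (fun k => b ≤ k ∧ k < 2*b)]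
  have : (range (2*b+3)).filter (fun k => b ≤ k ∧ k < 2*b) = Finset.Ico b (2*b) := by
    ext k; simp only [Finset.mem_filter, Finset.mem_range, Finset.mem_Ico]; omega
  rw [this, Nat.card_Ico]; omega

lemma W_card {b : ℕ} :
    (univ.filter fun y : Fin (2*b+3) => y.val < 2*b).card = 2*b := by
  rw [card_univ_filter_val (fun k => k < 2*b)]
  have : (range (2*b+3)).filter (fun k => k < 2*b) = range (2*b) := by
    ext k; simp only [Finset.mem_filter, Finset.mem_range]; omega
  rw [this, Finset.card_range]

lemma degIn_star {b τ : ℕ} (t : Fin τ) {x : Fin (2*b+3)} (hx : x.val < 2*b) :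
    degIn (Gr b τ t) (univ.filter fun y : Fin (2*b+3) => y.val < 2*b) x = b := by
  unfold degIn
  rcases lt_or_ge x.val b with hxb | hxb
  · have e : ((univ.filter fun y : Fin (2*b+3) => y.val < 2*b).filter
        (fun y => (Gr b τ t).Adj x y))
        = univ.filter fun y : Fin (2*b+3) => b ≤ y.val ∧ y.val < 2*b := by
      ext y
      simp only [Finset.mem_filter, Finset.mem_univ, true_and, adj_iff]
      unfold relN
      constructor
      · intro hy; omega
      · intro hy; omega
    rw [e, side_card2]
  · have e : ((univ.filter fun y : Fin (2*b+3) => y.val < 2*b).filter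
        (fun y => (Gr b τ t).Adj x y))
        = univ.filter fun y : Fin (2*b+3) => y.val < b := by
      ext y
      simp only [Finset.mem_filter, Finset.mem_univ, true_and, adj_iff]
      unfold relN
      constructor
      · intro hy; omega
      · intro hy; omega
    rw [e, side_card1]

lemma minDensity_star {b τ : ℕ} (hb : 1 ≤ b) (t : Fin τ) :
    minDensity (Gr b τ t) (univ.filter fun y : Fin (2*b+3) => y.val < 2*b) = b := by
  have hx0 : (⟨0, by omega⟩ : Fin (2*b+3)) ∈ univ.filter (fun y : Fin (2*b+3) => y.val < 2*b) := by
    simp only [Finset.mem_filter, Finset.mem_univ, true_and]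
    show 0 < 2*b
    omega
  apply le_antisymm
  · exact le_trans (minDensity_le_degIn hx0) (le_of_eq (degIn_star t (by show 0 < 2*b; omega)))
  · refine le_csInf ⟨_, Set.mem_image_of_mem _ (Finset.mem_coe.mpr hx0)⟩ ?_
    rintro k ⟨x, hxmem, rfl⟩
    have hx2b : x.val < 2*b := (Finset.mem_filter.mp (Finset.mem_coe.mp hxmem)).2
    show b ≤ degIn (Gr b τ t) (univ.filter fun y : Fin (2*b+3) => y.val < 2*b) x
    rw [degIn_star t hx2b]

lemma fam_star {b τ : ℕ} (hb : 1 ≤ b) (hτpos : 0 < τ) :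
    fam (Gr b τ) (univ.filter fun y : Fin (2*b+3) => y.val < 2*b) = (b:ℝ) := by
  unfold fam
  have hτR : (0:ℝ) < τ := by exact_mod_cast hτpos
  have : (∑ t : Fin τ, (minDensity (Gr b τ t)
      (univ.filter fun y : Fin (2*b+3) => y.val < 2*b) : ℝ)) = (τ:ℝ) * b := by
    calc (∑ t : Fin τ, (minDensity (Gr b τ t)
          (univ.filter fun y : Fin (2*b+3) => y.val < 2*b) : ℝ))
        = ∑ t : Fin τ, (b:ℝ) := by
          apply Finset.sum_congr rfl
          intro t _
          rw [minDensity_star hb t]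
      _ = (τ:ℝ) * b := by
          rw [Finset.sum_const, Finset.card_univ, Fintype.card_fin, nsmul_eq_mul]
  rw [this]
  field_simp

end BffSix


/-- For all `b ≥ 1` and even `τ ≥ 2` there is a graph history on `n = 2b+3`
vertices on which every `score_a` peeling chain only contains sets of `f_am`-value at most `2`,
while some set of `2b` vertices has `f_am`-value `b`; hence `FindBFF_A` has approximation ratio
`O(1/n)` for the BFF-am problem. -/
theorem findBffA_bad_for_bff_am (b τ : ℕ) (hb : 1 ≤ b) (hτ : 2 ≤ τ) (heven : Even τ) :
    ∃ G : Fin τ → SimpleGraph (Fin (2 * b + 3)),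
      (∀ (S : ℕ → Finset (Fin (2 * b + 3))) (v : ℕ → Fin (2 * b + 3)),
        IsScoreAPeeling G S v → ∀ i < 2 * b + 3, fam G (S i) ≤ 2) ∧
      ∃ Sstar : Finset (Fin (2 * b + 3)), Sstar.card = 2 * b ∧ fam G Sstar = (b : ℝ) := by
  obtain ⟨h, hτe⟩ := heven
  obtain ⟨k, rfl⟩ : ∃ k, h = k + 1 := ⟨h - 1, by omega⟩
  refine ⟨BffSix.Gr b τ, ?_, ?_⟩
  · intro S v hpeel i hi
    obtain ⟨h0, hstep⟩ := hpeel
    have hcard : ∀ j, j ≤ 2*b+2 → (S j).card = 2*b+3 - j := by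
      intro j
      induction j with
      | zero => intro _; rw [h0]; simp
      | succ j ih =>
        intro hj
        obtain ⟨hvm, hSeq, -⟩ := hstep j (by omega)
        rw [hSeq, Finset.card_sdiff_of_subset (by simpa using hvm), ih (by omega)]
        simp only [Finset.card_singleton]
        omega
    have hinv : ∀ j, j ≤ 2*b →
        BffSix.uV b ∈ S j ∧ BffSix.vV b ∈ S j ∧ BffSix.sV b ∈ S j := by
      intro j
      induction j with
      | zero =>
        intro _
        rw [h0]
        exact ⟨Finset.mem_univ _, Finset.mem_univ _, Finset.mem_univ _⟩
      | succ j ih =>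
        intro hj
        obtain ⟨hu, hv, hs⟩ := ih (by omega)
        obtain ⟨hvm, hSeq, hmin⟩ := hstep j (by omega)
        have hWne : ∃ x ∈ S j, x.val < 2*b := by
          by_contra hc
          push_neg at hc
          have hsub : S j ⊆ {BffSix.uV b, BffSix.vV b, BffSix.sV b} := by
            intro x hx
            have h1 := hc x hx
            have h2 := x.isLt
            simp only [Finset.mem_insert, Finset.mem_singleton, Fin.ext_iff, BffSix.uV_val,
              BffSix.vV_val, BffSix.sV_val]
            omega
          have h3 : ({BffSix.uV b, BffSix.vV b, BffSix.sV b} :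
              Finset (Fin (2*b+3))).card ≤ 3 := by
            refine le_trans (Finset.card_insert_le _ _) ?_
            refine Nat.succ_le_succ (le_trans (Finset.card_insert_le _ _) ?_)
            simp
          have h4 := Finset.card_le_card hsub
          have h5 := hcard j (by omega)
          omega
        obtain ⟨w, hwS, hw2b, hltu, hltv, hlts⟩ :=
          BffSix.score_comp (k := k) hτe hs hu hv hWne
        have hmw := hmin w hwS
        have hne1 : v j ≠ BffSix.uV b := by intro he; rw [he] at hmw; exact absurd hmw (not_le.mpr hltu)
        have hne2 : v j ≠ BffSix.vV b := by intro he; rw [he] at hmw; exact absurd hmw (not_le.mpr hltv)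
        have hne3 : v j ≠ BffSix.sV b := by intro he; rw [he] at hmw; exact absurd hmw (not_le.mpr hlts)
        rw [hSeq]
        exact ⟨Finset.mem_sdiff.mpr ⟨hu, Finset.notMem_singleton.mpr (Ne.symm hne1)⟩,
          Finset.mem_sdiff.mpr ⟨hv, Finset.notMem_singleton.mpr (Ne.symm hne2)⟩,
          Finset.mem_sdiff.mpr ⟨hs, Finset.notMem_singleton.mpr (Ne.symm hne3)⟩⟩
    by_cases hle : i ≤ 2*b
    · obtain ⟨hu, hv, -⟩ := hinv i hle
      exact BffSix.fam_le_two_uv hτ hu hv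
    · have hsmall : (S i).card ≤ 3 := by
        have h5 := hcard i (by omega)
        omega
      exact BffSix.fam_le_two_small hτ hsmall
  · refine ⟨Finset.univ.filter fun y : Fin (2*b+3) => y.val < 2*b, ?_, ?_⟩
    · exact BffSix.W_card
    · exact BffSix.fam_star hb (by omega)
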